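/- Let 𝒫 be a finite set of properties, X ⊆ ℝⁿ a convex set, and for each p ∈ 𝒫 let γ_p : ℝⁿ → ℝ be a scoring function. Suppose the strict epistemic pooling principle holds for average pooling for all e, f ∈ X (for every p ∈ 𝒫, γ_p((e+f)/2) > 0 ↔ γ_p(e) > 0 ∨ γ_p(f) > 0), and suppose every epistemic state is realized: for every subset Q ⊆ 𝒫 there exists e ∈ X with Γ(e) = Q, where Γ(e) = {p ∈ 𝒫 : γ_p(e) > 0}. Then n ≥ |𝒫|. -/

import Mathlib

section helpers

section helpers

variable {n : ℕ} {P : Type*} {X : Set (Fin n → ℝ)} {γ : P → (Fin n → ℝ) → ℝ}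

private lemma lemA_pow (hX : Convex ℝ X)
    (hpool : ∀ e ∈ X, ∀ f ∈ X, ∀ p : P,
      γ p ((e + f) / 2) > 0 ↔ (γ p e > 0 ∨ γ p f > 0)) (q : P) :
    ∀ (k : ℕ) (u v : Fin n → ℝ), u ∈ X → v ∈ X → γ q u > 0 →
      ∀ a : ℝ, 0 < a → a ≤ 1 → (1:ℝ)/2 ≤ 2^k * a →
        γ q (a • u + (1-a) • v) > 0 := by
  intro k
  induction k with
  | zero =>
    intro u v hu hv hgu a ha0 ha1 ha2
    norm_num at ha2
    have hwX : (2*a-1) • u + (2-2*a) • v ∈ X :=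
      hX hu hv (by linarith) (by linarith) (by ring)
    have h := (hpool u hu _ hwX q).2 (Or.inl hgu)
    have heq : (u + ((2*a-1) • u + (2-2*a) • v)) / 2 = a • u + (1-a) • v := by
      funext i
      simp only [Pi.div_apply, Pi.add_apply, Pi.smul_apply, smul_eq_mul, Pi.ofNat_apply]
      ring
    rwa [heq] at h
  | succ k ih =>
    intro u v hu hv hgu a ha0 ha1 ha2
    by_cases h : (1:ℝ)/2 ≤ a
    · have h2k : (1:ℝ) ≤ 2 ^ k := one_le_pow₀ (by norm_num)
      exact ih u v hu hv hgu a ha0 ha1 (by nlinarith)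
    · push_neg at h
      have hwX : (2*a) • u + (1-2*a) • v ∈ X :=
        hX hu hv (by linarith) (by linarith) (by ring)
      have hg' : γ q ((2*a) • u + (1-2*a) • v) > 0 := by
        apply ih u v hu hv hgu (2*a) (by linarith) (by linarith)
        rw [pow_succ] at ha2; linarith
      have hh := (hpool _ hwX v hv q).2 (Or.inl hg')
      have heq : (((2*a) • u + (1-2*a) • v) + v) / 2 = a • u + (1-a) • v := by
        funext i
        simp only [Pi.div_apply, Pi.add_apply, Pi.smul_apply, smul_eq_mul, Pi.ofNat_apply]
        ring
      rwa [heq] at hh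

private lemma lemA (hX : Convex ℝ X)
    (hpool : ∀ e ∈ X, ∀ f ∈ X, ∀ p : P,
      γ p ((e + f) / 2) > 0 ↔ (γ p e > 0 ∨ γ p f > 0)) (q : P)
    {u v : Fin n → ℝ} (hu : u ∈ X) (hv : v ∈ X) (hgu : γ q u > 0)
    {a : ℝ} (ha0 : 0 < a) (ha1 : a ≤ 1) : γ q (a • u + (1-a) • v) > 0 := by
  obtain ⟨k, hk⟩ := pow_unbounded_of_one_lt (1/a) (by norm_num : (1:ℝ) < 2)
  refine lemA_pow hX hpool q k u v hu hv hgu a ha0 ha1 ?_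
  rw [div_lt_iff₀ ha0] at hk
  nlinarith

private lemma lemA_sum (hX : Convex ℝ X)
    (hpool : ∀ e ∈ X, ∀ f ∈ X, ∀ p : P,
      γ p ((e + f) / 2) > 0 ↔ (γ p e > 0 ∨ γ p f > 0)) (q : P)
    {ι : Type*} [DecidableEq ι] (t : Finset ι) (w : ι → ℝ) (x : ι → Fin n → ℝ)
    (hw : ∀ i ∈ t, 0 ≤ w i) (hw1 : ∑ i ∈ t, w i = 1)
    (hx : ∀ i ∈ t, x i ∈ X) {i₀ : ι} (hi₀ : i₀ ∈ t) (hwi : 0 < w i₀)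
    (hg : γ q (x i₀) > 0) : γ q (∑ i ∈ t, w i • x i) > 0 := by
  have hsplit : ∑ i ∈ t, w i • x i = w i₀ • x i₀ + ∑ i ∈ t.erase i₀, w i • x i :=
    (Finset.add_sum_erase t _ hi₀).symm
  have htail : ∑ i ∈ t.erase i₀, w i = 1 - w i₀ := by
    rw [Finset.sum_erase_eq_sub hi₀, hw1]
  have hle : w i₀ ≤ 1 := by
    have h0 : 0 ≤ ∑ i ∈ t.erase i₀, w i :=
      Finset.sum_nonneg fun i hi => hw i (Finset.mem_of_mem_erase hi)
    linarith
  rcases eq_or_lt_of_le hle with heq | hlt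
  · have h0 : ∑ i ∈ t.erase i₀, w i = 0 := by rw [htail, heq]; ring
    have hz : ∀ i ∈ t.erase i₀, w i = 0 :=
      (Finset.sum_eq_zero_iff_of_nonneg
        (fun j hj => hw j (Finset.mem_of_mem_erase hj))).1 h0
    have hz2 : ∑ i ∈ t.erase i₀, w i • x i = 0 :=
      Finset.sum_eq_zero fun i hi => by rw [hz i hi, zero_smul]
    rw [hsplit, hz2, add_zero, heq, one_smul]
    exact hg
  · have hb0 : 0 < 1 - w i₀ := by linarith
    set v := ∑ i ∈ t.erase i₀, (w i / (1 - w i₀)) • x i with hv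
    have hvX : v ∈ X := by
      apply hX.sum_mem
      · exact fun i hi => div_nonneg (hw i (Finset.mem_of_mem_erase hi)) hb0.le
      · rw [← Finset.sum_div, htail]; field_simp
      · exact fun i hi => hx i (Finset.mem_of_mem_erase hi)
    have hbv : (1 - w i₀) • v = ∑ i ∈ t.erase i₀, w i • x i := by
      rw [hv, Finset.smul_sum]
      refine Finset.sum_congr rfl fun i hi => ?_
      rw [smul_smul]
      congr 1
      field_simp
    have := lemA hX hpool q (hx i₀ hi₀) hvX hg hwi hle
    rw [hsplit, ← hbv]
    exact this

private lemma lemB (hX : Convex ℝ X)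
    (hpool : ∀ e ∈ X, ∀ f ∈ X, ∀ p : P,
      γ p ((e + f) / 2) > 0 ↔ (γ p e > 0 ∨ γ p f > 0)) (q : P) :
    Convex ℝ {x | x ∈ X ∧ γ q x ≤ 0} := by
  intro u hu v hv a b ha hb hab
  refine ⟨hX hu.1 hv.1 ha hb hab, ?_⟩
  by_contra hpos
  push_neg at hpos
  have hmid : ¬ γ q ((u + v)/2) > 0 := fun h => by
    rcases (hpool u hu.1 v hv.1 q).1 h with h' | h'
    · exact absurd h' (not_lt.2 hu.2)
    · exact absurd h' (not_lt.2 hv.2)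
  have haz : 0 < a := by
    rcases ha.lt_or_eq with h | h
    · exact h
    · exfalso
      have hb1 : b = 1 := by linarith
      have : a • u + b • v = v := by rw [← h, hb1, zero_smul, one_smul, zero_add]
      rw [this] at hpos
      exact absurd hpos (not_lt.2 hv.2)
  have hbz : 0 < b := by
    rcases hb.lt_or_eq with h | h
    · exact h
    · exfalso
      have ha1 : a = 1 := by linarith
      have : a • u + b • v = u := by rw [← h, ha1, zero_smul, one_smul, add_zero]
      rw [this] at hpos
      exact absurd hpos (not_lt.2 hu.2)
  have hzX : a • u + b • v ∈ X := hX hu.1 hv.1 ha hb hab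
  rcases le_total a (1/2 : ℝ) with hca | hca
  · have hb2 : (1:ℝ)/2 ≤ b := by linarith
    have hmm : (1/(2*b)) • (a • u + b • v) + (1 - 1/(2*b)) • u = (u + v)/2 := by
      funext i
      simp only [Pi.div_apply, Pi.add_apply, Pi.smul_apply, smul_eq_mul, Pi.ofNat_apply]
      have hab' : a = 1 - b := by linarith
      rw [hab']
      field_simp
      ring
    have := lemA hX hpool q hzX hu.1 hpos (a := 1/(2*b)) (by positivity)
      (by rw [div_le_one (by linarith)]; linarith)
    rw [hmm] at this
    exact hmid this
  · have ha2 : (1:ℝ)/2 ≤ a := by linarith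
    have hmm : (1/(2*a)) • (a • u + b • v) + (1 - 1/(2*a)) • v = (u + v)/2 := by
      funext i
      simp only [Pi.div_apply, Pi.add_apply, Pi.smul_apply, smul_eq_mul, Pi.ofNat_apply]
      have hab' : b = 1 - a := by linarith
      rw [hab']
      field_simp
      ring
    have := lemA hX hpool q hzX hv.1 hpos (a := 1/(2*a)) (by positivity)
      (by rw [div_le_one (by linarith)]; linarith)
    rw [hmm] at this
    exact hmid this


end helpers


/-- If the strict epistemic pooling principle holds for average pooling on
a convex set X ⊆ ℝⁿ for a finite set of properties 𝒫, and every epistemic state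
Q ⊆ 𝒫 is realized by some embedding in X, then n ≥ |𝒫|. -/
theorem avg_pooling_dimension_bound (n : ℕ) (P : Type*) [Fintype P]
    (X : Set (Fin n → ℝ)) (hX : Convex ℝ X)
    (γ : P → (Fin n → ℝ) → ℝ)
    (hpool : ∀ e ∈ X, ∀ f ∈ X, ∀ p : P,
      γ p ((e + f) / 2) > 0 ↔ (γ p e > 0 ∨ γ p f > 0))
    (hreal : ∀ Q : Set P, ∃ e ∈ X, ∀ p : P, γ p e > 0 ↔ p ∈ Q) :
    Fintype.card P ≤ n := by
  classical
  obtain ⟨e₀, he₀X, he₀⟩ := hreal ∅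
  have he₀' : ∀ p, γ p e₀ ≤ 0 := fun p => not_lt.1 fun h => (he₀ p).1 h
  choose e heX hee using fun p : P => hreal {p}
  have heq : ∀ p q : P, γ q (e p) > 0 ↔ q = p := by
    intro p q; rw [hee p q]; exact Set.mem_singleton_iff
  have hmax : ∀ a : ℝ, max a 0 - max (-a) 0 = a := by
    intro a
    rcases le_total a 0 with h | h
    · rw [max_eq_right h, max_eq_left (neg_nonneg.2 h)]; ring
    · rw [max_eq_left h, max_eq_right (neg_nonpos.2 h)]; ring
  have hkey : ∀ c : P → ℝ, (∑ p, c p • (e p - e₀)) = 0 → ∀ q, ¬(0 < c q) := by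
    intro c hc q hq
    set s := ∑ p, max (c p) 0 with hs
    set tt := ∑ p, max (-c p) 0 with htt
    set M := max s tt with hM
    have hs0 : 0 ≤ s := Finset.sum_nonneg fun i _ => le_max_right _ _
    have htt0 : 0 ≤ tt := Finset.sum_nonneg fun i _ => le_max_right _ _
    have hcqs : c q ≤ s := by
      have h1 := Finset.single_le_sum (f := fun p => max (c p) 0)
        (fun i _ => le_max_right _ _) (Finset.mem_univ q)
      exact (le_max_left _ _).trans h1
    have hM0 : 0 < M := lt_of_lt_of_le hq (hcqs.trans (le_max_left _ _))
    set x : Option P → (Fin n → ℝ) := fun o => o.elim e₀ e with hx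
    set w1 : Option P → ℝ := fun o => M⁻¹ * o.elim (M - s) (fun p => max (c p) 0) with hw1
    set w2 : Option P → ℝ := fun o => M⁻¹ * o.elim (M - tt) (fun p => max (-c p) 0) with hw2
    have hxX : ∀ o, x o ∈ X := by
      intro o; cases o with
      | none => exact he₀X
      | some p => exact heX p
    have hw1nn : ∀ o, 0 ≤ w1 o := by
      intro o
      apply mul_nonneg (inv_nonneg.2 hM0.le)
      cases o with
      | none => simp only [Option.elim]; have := le_max_left s tt; linarith
      | some p => exact le_max_right _ _
    have hw2nn : ∀ o, 0 ≤ w2 o := by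
      intro o
      apply mul_nonneg (inv_nonneg.2 hM0.le)
      cases o with
      | none => simp only [Option.elim]; have := le_max_right s tt; linarith
      | some p => exact le_max_right _ _
    have hw1sum : ∑ o : Option P, w1 o = 1 := by
      rw [Fintype.sum_option]
      simp only [hw1, Option.elim]
      rw [← Finset.mul_sum, ← hs]
      field_simp
      ring
    have hw2sum : ∑ o : Option P, w2 o = 1 := by
      rw [Fintype.sum_option]
      simp only [hw2, Option.elim]
      rw [← Finset.mul_sum, ← htt]
      field_simp
      ring
    have hcsum : ∑ p, c p = s - tt := by
      rw [hs, htt, ← Finset.sum_sub_distrib]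
      exact Finset.sum_congr rfl fun p _ => (hmax (c p)).symm
    have hce : ∑ p, c p • e p = (s - tt) • e₀ := by
      have h1 : ∑ p, c p • (e p - e₀) = ∑ p, c p • e p - (∑ p, c p) • e₀ := by
        simp [smul_sub, Finset.sum_sub_distrib, Finset.sum_smul]
      rw [h1, sub_eq_zero] at hc
      rw [hc, hcsum]
    have hzz : ∑ o : Option P, w1 o • x o = ∑ o : Option P, w2 o • x o := by
      rw [Fintype.sum_option, Fintype.sum_option]
      simp only [hw1, hw2, hx, Option.elim]
      have hsplit : ∀ p : P, (M⁻¹ * max (c p) 0) • e p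
          = (M⁻¹ * c p) • e p + (M⁻¹ * max (-c p) 0) • e p := by
        intro p
        rw [← add_smul]
        congr 1
        rw [← mul_add]
        congr 1
        have := hmax (c p); linarith
      rw [Finset.sum_congr rfl fun p _ => hsplit p, Finset.sum_add_distrib]
      have hmid : ∑ p, (M⁻¹ * c p) • e p = (M⁻¹ * (s - tt)) • e₀ := by
        have h2 : ∑ p, (M⁻¹ * c p) • e p = M⁻¹ • ∑ p, c p • e p := by
          rw [Finset.smul_sum]
          exact Finset.sum_congr rfl fun p _ => by rw [smul_smul]
        rw [h2, hce, smul_smul]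
      rw [hmid, ← add_assoc, ← add_smul]
      have hco : M⁻¹ * (M - s) + M⁻¹ * (s - tt) = M⁻¹ * (M - tt) := by ring
      rw [hco]
    have hz1pos : γ q (∑ o : Option P, w1 o • x o) > 0 := by
      apply lemA_sum hX hpool q Finset.univ w1 x (fun i _ => hw1nn i) hw1sum
        (fun i _ => hxX i) (Finset.mem_univ (some q))
      · exact mul_pos (inv_pos.2 hM0) (lt_of_lt_of_le hq (le_max_left _ _))
      · exact (heq q q).2 rfl
    have hz2np : γ q (∑ o : Option P, w2 o • x o) ≤ 0 := by
      set T := Finset.univ.filter (fun o => w2 o ≠ 0) with hT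
      have hsub : T ⊆ Finset.univ := Finset.filter_subset _ _
      have hzero : ∀ o ∈ Finset.univ, o ∉ T → w2 o = 0 := by
        intro o _ ho
        by_contra h
        exact ho (Finset.mem_filter.2 ⟨Finset.mem_univ o, h⟩)
      have hTsum : ∑ o ∈ T, w2 o • x o = ∑ o : Option P, w2 o • x o :=
        Finset.sum_subset hsub fun o h1 h2 => by rw [hzero o h1 h2, zero_smul]
      have hTw : ∑ o ∈ T, w2 o = 1 := by
        rw [Finset.sum_subset hsub fun o h1 h2 => hzero o h1 h2, hw2sum]
      have hmem : ∀ o ∈ T, x o ∈ {y | y ∈ X ∧ γ q y ≤ 0} := by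
        intro o ho
        refine ⟨hxX o, ?_⟩
        cases o with
        | none => exact he₀' q
        | some p =>
          have hw2ne : w2 (some p) ≠ 0 := (Finset.mem_filter.1 ho).2
          have hmne : max (-c p) 0 ≠ 0 := by
            intro h; apply hw2ne; simp [hw2, Option.elim, h]
          have hcp : c p < 0 := by
            by_contra h
            push_neg at h
            exact hmne (max_eq_right (neg_nonpos.2 h))
          have hpq : q ≠ p := fun h => by rw [h] at hq; linarith
          exact not_lt.1 fun hpos => hpq ((heq p q).1 hpos)
      have := (lemB hX hpool q).sum_mem (fun i hi => hw2nn i) hTw hmem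
      rw [hTsum] at this
      exact this.2
    rw [hzz] at hz1pos
    linarith
  have hLI : LinearIndependent ℝ (fun p : P => e p - e₀) := by
    rw [Fintype.linearIndependent_iff]
    intro g hg p
    by_contra hne
    rcases lt_or_gt_of_ne hne with hlt | hgt
    · refine hkey (fun p => -g p) ?_ p (show (0:ℝ) < -g p by linarith)
      simp only [neg_smul, Finset.sum_neg_distrib, hg, neg_zero]
    · exact hkey g hg p hgt
  calc Fintype.card P ≤ Module.finrank ℝ (Fin n → ℝ) := hLI.fintype_card_le_finrank
    _ = n := Module.finrank_fin_fun ℝ
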